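/- Exponential tilt implied by the logistic model (Section 3.2). Let U : Ω → ℝ be a random variable and G : ℝ → ℝ a measurable function such that E[D | σ(U)] = expit(logit ρ + G(U)) almost surely. Let μ₀ and μ₁ denote the conditional laws of U given D = 0 and D = 1 respectively (μ_d(A) = P({U ∈ A} ∩ {D = d})/P(D = d)). Then μ₁ is absolutely continuous with respect to μ₀ with Radon–Nikodym density exp∘G: for every Borel set A ⊆ ℝ, P(U ∈ A | D = 1) = ∫_A exp(G(u)) dμ₀(u). In particular ∫ exp(G(u)) dμ₀(u) = 1. -/

import Mathlib

open MeasureTheory Real Set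

/-- The expit (inverse logit) function. -/
noncomputable def expit (x : ℝ) : ℝ := Real.exp x / (1 + Real.exp x)

/-- The logit function. -/
noncomputable def logit (p : ℝ) : ℝ := Real.log (p / (1 - p))

lemma one_add_exp_pos (x : ℝ) : 0 < 1 + Real.exp x := by positivity

lemma expit_nonneg (x : ℝ) : 0 ≤ expit x :=
  div_nonneg (Real.exp_pos x).le (one_add_exp_pos x).le

lemma expit_le_one (x : ℝ) : expit x ≤ 1 := by
  rw [expit, div_le_one (one_add_exp_pos x)]; linarith

lemma expit_eq_exp_mul (x : ℝ) : expit x = Real.exp x * (1 - expit x) := by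
  have h := (one_add_exp_pos x).ne'
  rw [expit]; field_simp; ring

lemma continuous_expit : Continuous expit :=
  Real.continuous_exp.div (continuous_const.add Real.continuous_exp)
    fun x => (one_add_exp_pos x).ne'

theorem exponential_tilt_of_logistic_model
    {Ω : Type*} [MeasurableSpace Ω] (μ : Measure Ω) [IsProbabilityMeasure μ]
    (D : Set Ω) (hD : MeasurableSet D)
    (hρ0 : 0 < (μ D).toReal) (hρ1 : (μ D).toReal < 1)
    (U : Ω → ℝ) (hU : Measurable U)
    (G : ℝ → ℝ) (hG : Measurable G)
    (hmodel : μ[D.indicator (fun _ => (1:ℝ)) | MeasurableSpace.comap U Real.measurableSpace]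
      =ᵐ[μ] fun ω => expit (logit (μ D).toReal + G (U ω)))
    (μ₀ μ₁ : Measure ℝ)
    (hμ₀ : μ₀ = Measure.map U ((μ Dᶜ)⁻¹ • μ.restrict Dᶜ))
    (hμ₁ : μ₁ = Measure.map U ((μ D)⁻¹ • μ.restrict D)) :
    μ₁ ≪ μ₀
      ∧ (∀ A : Set ℝ, MeasurableSet A →
          (μ₁ A).toReal = ∫ u in A, Real.exp (G u) ∂μ₀)
      ∧ (∫ u, Real.exp (G u) ∂μ₀) = 1 := by
  set ρ : ℝ := (μ D).toReal with hρ
  set ν : Measure ℝ := Measure.map U μ with hν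
  have hνprob : IsProbabilityMeasure ν := Measure.isProbabilityMeasure_map hU.aemeasurable
  set p : ℝ → ℝ := fun u => expit (logit ρ + G u) with hp
  have hp_meas : Measurable p :=
    continuous_expit.measurable.comp (measurable_const.add hG)
  have hp0 : ∀ u, 0 ≤ p u := fun u => expit_nonneg _
  have hp1 : ∀ u, p u ≤ 1 := fun u => expit_le_one _
  -- basic facts about μ D and μ Dᶜ
  have hDtop : μ D ≠ ⊤ := measure_ne_top μ D
  have hDne : μ D ≠ 0 := by
    intro h; simp [hρ, h] at hρ0
  have hDctop : μ Dᶜ ≠ ⊤ := measure_ne_top μ Dᶜ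
  have hsum : (μ D).toReal + (μ Dᶜ).toReal = 1 := by
    rw [← ENNReal.toReal_add hDtop hDctop, measure_add_measure_compl hD]
    simp
  have hDc_toReal : (μ Dᶜ).toReal = 1 - ρ := by rw [← hsum]; ring
  have hDcne : μ Dᶜ ≠ 0 := by
    intro h; rw [h] at hDc_toReal; simp at hDc_toReal; linarith
  -- the key real-valued identity
  have hkeyR : ∀ u, p u = ρ / (1 - ρ) * (Real.exp (G u) * (1 - p u)) := by
    intro u
    have h1 : Real.exp (logit ρ) = ρ / (1 - ρ) :=
      Real.exp_log (div_pos hρ0 (by linarith))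
    calc p u = Real.exp (logit ρ + G u) * (1 - p u) := expit_eq_exp_mul _
    _ = ρ / (1 - ρ) * (Real.exp (G u) * (1 - p u)) := by
        rw [Real.exp_add, h1]; ring
  -- conditional expectation setup
  have hm : MeasurableSpace.comap U Real.measurableSpace ≤ _ := hU.comap_le
  haveI : SigmaFinite (μ.trim hm) := by infer_instance
  have hint_ind : Integrable (D.indicator fun _ => (1:ℝ)) μ :=
    (integrable_const (1:ℝ)).indicator hD
  -- Step 1: map U (μ.restrict D) has density pE w.r.t. ν
  have key1 : ∀ A : Set ℝ, MeasurableSet A →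
      Measure.map U (μ.restrict D) A = ∫⁻ u in A, ENNReal.ofReal (p u) ∂ν := by
    intro A hA
    have hAm : MeasurableSet[MeasurableSpace.comap U Real.measurableSpace] (U ⁻¹' A) :=
      ⟨A, hA, rfl⟩
    have hAU : MeasurableSet (U ⁻¹' A) := hU hA
    have hreal : (μ (U ⁻¹' A ∩ D)).toReal = ∫ u in A, p u ∂ν := by
      have e1 : ∫ x in U ⁻¹' A, D.indicator (fun _ => (1:ℝ)) x ∂μ
          = (μ (U ⁻¹' A ∩ D)).toReal := by
        rw [setIntegral_indicator hD, setIntegral_const, smul_eq_mul, mul_one]; rfl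
      have e2 : ∫ x in U ⁻¹' A, D.indicator (fun _ => (1:ℝ)) x ∂μ
          = ∫ x in U ⁻¹' A, p (U x) ∂μ := by
        rw [← setIntegral_condExp hm hint_ind hAm]
        exact integral_congr_ae (ae_restrict_of_ae hmodel)
      have e3 : ∫ x in U ⁻¹' A, p (U x) ∂μ = ∫ u in A, p u ∂ν := by
        rw [hν, setIntegral_map hA hp_meas.aestronglyMeasurable hU.aemeasurable]
      rw [← e1, e2, e3]
    have hintp : Integrable p (ν.restrict A) := by
      refine (integrable_const (1:ℝ)).mono' hp_meas.aestronglyMeasurable ?_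
      filter_upwards with u
      rw [Real.norm_eq_abs, abs_of_nonneg (hp0 u)]; exact hp1 u
    have e4 : ENNReal.ofReal (∫ u in A, p u ∂ν) = ∫⁻ u in A, ENNReal.ofReal (p u) ∂ν :=
      ofReal_integral_eq_lintegral_ofReal hintp
        (Filter.Eventually.of_forall fun u => hp0 u)
    rw [Measure.map_apply hU hA, Measure.restrict_apply hAU,
      ← ENNReal.ofReal_toReal (measure_ne_top μ (U ⁻¹' A ∩ D)), hreal, e4]
  -- Step 0: map U (μ.restrict Dᶜ) has density qE w.r.t. ν
  have hq_meas : Measurable fun u => ENNReal.ofReal (1 - p u) :=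
    (measurable_const.sub hp_meas).ennreal_ofReal
  have hpE_meas : Measurable fun u => ENNReal.ofReal (p u) := hp_meas.ennreal_ofReal
  have he_meas : Measurable fun u => ENNReal.ofReal (Real.exp (G u)) :=
    (Real.measurable_exp.comp hG).ennreal_ofReal
  have key0 : ∀ A : Set ℝ, MeasurableSet A →
      Measure.map U (μ.restrict Dᶜ) A = ∫⁻ u in A, ENNReal.ofReal (1 - p u) ∂ν := by
    intro A hA
    have hAU : MeasurableSet (U ⁻¹' A) := hU hA
    have hsplit : μ (U ⁻¹' A ∩ D) + μ (U ⁻¹' A ∩ Dᶜ) = ν A := by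
      rw [hν, Measure.map_apply hU hA, ← Set.diff_eq, measure_inter_add_diff _ hD]
    have hνA : ν A = (∫⁻ u in A, ENNReal.ofReal (p u) ∂ν)
        + ∫⁻ u in A, ENNReal.ofReal (1 - p u) ∂ν := by
      have hone : ∀ u : ℝ, ENNReal.ofReal (p u) + ENNReal.ofReal (1 - p u) = 1 := by
        intro u
        rw [← ENNReal.ofReal_add (hp0 u) (by linarith [hp1 u])]
        simp
      calc ν A = ∫⁻ _ in A, 1 ∂ν := (setLIntegral_one A).symm
      _ = ∫⁻ u in A, (ENNReal.ofReal (p u) + ENNReal.ofReal (1 - p u)) ∂ν :=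
          lintegral_congr fun u => (hone u).symm
      _ = (∫⁻ u in A, ENNReal.ofReal (p u) ∂ν)
          + ∫⁻ u in A, ENNReal.ofReal (1 - p u) ∂ν :=
          lintegral_add_left hpE_meas _
    have hfin : (∫⁻ u in A, ENNReal.ofReal (p u) ∂ν) ≠ ⊤ := by
      rw [← key1 A hA]; exact measure_ne_top _ _
    have hcomb : (∫⁻ u in A, ENNReal.ofReal (p u) ∂ν) + μ (U ⁻¹' A ∩ Dᶜ)
        = (∫⁻ u in A, ENNReal.ofReal (p u) ∂ν) + ∫⁻ u in A, ENNReal.ofReal (1 - p u) ∂ν := by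
      have e := key1 A hA
      rw [Measure.map_apply hU hA, Measure.restrict_apply hAU] at e
      rw [← hνA, ← hsplit, e]
    rw [Measure.map_apply hU hA, Measure.restrict_apply hAU]
    exact (ENNReal.add_right_inj hfin).mp hcomb
  have hκ0 : Measure.map U (μ.restrict Dᶜ)
      = ν.withDensity (fun u => ENNReal.ofReal (1 - p u)) := by
    ext A hA
    rw [key0 A hA, withDensity_apply _ hA]
  -- pointwise ENNReal identity
  have hptE : ∀ u : ℝ, ENNReal.ofReal (p u)
      = (μ D * (μ Dᶜ)⁻¹) * (ENNReal.ofReal (1 - p u) * ENNReal.ofReal (Real.exp (G u))) := by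
    intro u
    have h1 : (0:ℝ) ≤ ρ / (1 - ρ) := div_nonneg hρ0.le (by linarith)
    calc ENNReal.ofReal (p u)
        = ENNReal.ofReal (ρ / (1 - ρ))
          * (ENNReal.ofReal (Real.exp (G u)) * ENNReal.ofReal (1 - p u)) := by
          rw [← ENNReal.ofReal_mul (Real.exp_pos _).le, ← ENNReal.ofReal_mul h1, ← hkeyR u]
    _ = (μ D * (μ Dᶜ)⁻¹) * (ENNReal.ofReal (1 - p u) * ENNReal.ofReal (Real.exp (G u))) := by
          rw [ENNReal.ofReal_div_of_pos (by linarith), hρ, ENNReal.ofReal_toReal hDtop,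
            ← hDc_toReal, ENNReal.ofReal_toReal hDctop, div_eq_mul_inv]
          ring
  -- main identity: μ₁ = μ₀.withDensity (ofReal ∘ exp ∘ G)
  have hmain : μ₁ = μ₀.withDensity (fun u => ENNReal.ofReal (Real.exp (G u))) := by
    ext A hA
    rw [hμ₁, Measure.map_smul, Measure.smul_apply, smul_eq_mul, key1 A hA,
      withDensity_apply _ hA, hμ₀, Measure.map_smul, Measure.restrict_smul,
      lintegral_smul_measure, hκ0, restrict_withDensity hA,
      lintegral_withDensity_eq_lintegral_mul _ hq_meas he_meas]
    rw [lintegral_congr fun u => hptE u, lintegral_const_mul (f := fun u => ENNReal.ofReal (1 - p u) * ENNReal.ofReal (Real.exp (G u))) _ (hq_meas.mul he_meas),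
      ← mul_assoc, ← mul_assoc, ENNReal.inv_mul_cancel hDne hDtop, one_mul]
    rfl
  -- conclusions
  have h2 : ∀ A : Set ℝ, MeasurableSet A →
      (μ₁ A).toReal = ∫ u in A, Real.exp (G u) ∂μ₀ := by
    intro A hA
    rw [hmain, withDensity_apply _ hA,
      integral_eq_lintegral_of_nonneg_ae
        (Filter.Eventually.of_forall fun u => (Real.exp_pos (G u)).le)
        (Real.measurable_exp.comp hG).aestronglyMeasurable]
  have h1univ : μ₁ univ = 1 := by
    rw [hμ₁, Measure.map_apply hU MeasurableSet.univ, Set.preimage_univ,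
      Measure.smul_apply, smul_eq_mul, Measure.restrict_apply_univ,
      ENNReal.inv_mul_cancel hDne hDtop]
  have h3 : (∫ u, Real.exp (G u) ∂μ₀) = 1 := by
    have := h2 univ MeasurableSet.univ
    rw [h1univ] at this
    simpa using this.symm
  exact ⟨hmain ▸ withDensity_absolutelyContinuous μ₀ _, h2, h3⟩
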